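/- Let Φ : M → ℝ^n be a smooth map and σ : M → M a smooth involution with Φ ∘ σ = Φ. If p is a fixed point of σ that is a critical point of the restriction of ‖Φ‖² to the fixed point set Q = M^σ, then p is a critical point of ‖Φ‖² on all of M. -/

import Mathlib

open scoped Manifold

private lemma mfderiv_congr_point' {E : Type*} [NormedAddCommGroup E] [NormedSpace ℝ E]
    {H : Type*} [TopologicalSpace H] (I : ModelWithCorners ℝ E H)
    {M : Type*} [TopologicalSpace M] [ChartedSpace H M]
    (f : M → ℝ) : ∀ (x y : M), x = y → ∀ (w : E),
      mfderiv I 𝓘(ℝ, ℝ) f x w = mfderiv I 𝓘(ℝ, ℝ) f y w := by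
  rintro x y rfl w; rfl

private lemma stmt_1_aux {E : Type*} [NormedAddCommGroup E] [NormedSpace ℝ E]
    {H : Type*} [TopologicalSpace H] (I : ModelWithCorners ℝ E H)
    {M : Type*} [TopologicalSpace M] [ChartedSpace H M] [IsManifold I (⊤ : ℕ∞) M]
    (f : M → ℝ) (hfc : ContMDiff I 𝓘(ℝ, ℝ) (⊤ : ℕ∞) f)
    (σ : M → M) (hσ : ContMDiff I I (⊤ : ℕ∞) σ)
    (hfσ : ∀ x, f (σ x) = f x)
    (p : M) (hp : σ p = p)
    (D : TangentSpace I p →L[ℝ] TangentSpace I p)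
    (hD : D = (mfderiv I I σ p : TangentSpace I p →L[ℝ] TangentSpace I p))
    (hcrit : ∀ v : TangentSpace I p, mfderiv I 𝓘(ℝ, ℝ) f p (v + D v) = 0) :
    mfderiv I 𝓘(ℝ, ℝ) f p = 0 := by
  have hσd : MDifferentiableAt I I σ p := hσ.mdifferentiableAt (by simp)
  have hfσ' : (f ∘ σ) = f := funext hfσ
  have h1 : mfderiv I 𝓘(ℝ, ℝ) (f ∘ σ) p =
      (mfderiv I 𝓘(ℝ, ℝ) f (σ p)).comp (mfderiv I I σ p) :=
    mfderiv_comp p (hfc.mdifferentiableAt (by simp)) hσd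
  have key : ∀ v : TangentSpace I p,
      mfderiv I 𝓘(ℝ, ℝ) f p (D v) = mfderiv I 𝓘(ℝ, ℝ) f p v := by
    intro v
    have h2 : mfderiv I 𝓘(ℝ, ℝ) f p v = mfderiv I 𝓘(ℝ, ℝ) (f ∘ σ) p v := by rw [hfσ']
    have h3 : mfderiv I 𝓘(ℝ, ℝ) (f ∘ σ) p v
        = mfderiv I 𝓘(ℝ, ℝ) f (σ p) (mfderiv I I σ p v) := by
      rw [h1]; rfl
    have h4 := mfderiv_congr_point' I f (σ p) p hp (mfderiv I I σ p v)
    rw [hD]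
    exact (h2.trans (h3.trans h4)).symm
  ext v
  have h := hcrit v
  rw [(mfderiv I 𝓘(ℝ, ℝ) f p).map_add, key v] at h
  have h2 : ∀ r : ℝ, r + r = 0 → r = 0 := fun r hr => by linarith
  exact h2 _ h

/-- Let Φ : M → ℝ^n be smooth and σ a smooth involution with Φ∘σ = Φ.
If p is a fixed point of σ that is a critical point of the restriction of ‖Φ‖² to
the fixed point set Q = M^σ (whose tangent space at p is {v + dσ_p v : v ∈ T_pM}),
then p is a critical point of ‖Φ‖² on all of M. -/
theorem stmt_1 {E : Type*} [NormedAddCommGroup E] [NormedSpace ℝ E]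
    {H : Type*} [TopologicalSpace H] (I : ModelWithCorners ℝ E H)
    {M : Type*} [TopologicalSpace M] [ChartedSpace H M] [IsManifold I (⊤ : ℕ∞) M]
    {n : ℕ} (Φ : M → EuclideanSpace ℝ (Fin n))
    (hΦ : ContMDiff I 𝓘(ℝ, EuclideanSpace ℝ (Fin n)) (⊤ : ℕ∞) Φ)
    (σ : M → M) (hσ : ContMDiff I I (⊤ : ℕ∞) σ) (hinvol : ∀ x, σ (σ x) = x)
    (hΦσ : ∀ x, Φ (σ x) = Φ x)
    (p : M) (hp : σ p = p)
    (D : TangentSpace I p →L[ℝ] TangentSpace I p)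
    (hD : D = (mfderiv I I σ p : TangentSpace I p →L[ℝ] TangentSpace I p))
    (hcrit : ∀ v : TangentSpace I p,
      mfderiv I 𝓘(ℝ, ℝ) (fun x => ‖Φ x‖ ^ 2) p (v + D v) = 0) :
    mfderiv I 𝓘(ℝ, ℝ) (fun x => ‖Φ x‖ ^ 2) p = 0 :=
  stmt_1_aux I (fun x => ‖Φ x‖ ^ 2)
    ((contDiff_norm_sq ℝ (E := EuclideanSpace ℝ (Fin n))).contMDiff.comp hΦ)
    σ hσ (fun x => by simp [hΦσ x]) p hp D hD hcrit
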